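/- (Theorem 1.) Let b1 and b2 be positive divisors of N such that one of b1, b2 divides the other. Let P1 and P2 be independent fixed-block bootstrap paths of length N from an injective circular data sequence of N_tot distinct observations, with fixed blocksizes b1 and b2 respectively (all block starting indices i.i.d. uniform on ZMod N_tot). Then the probability that P1 and P2 are identical is (1/N_tot)^{lcm(N/b1, N/b2)}, where lcm(a, b) is the least common multiple of the integers a and b. -/

import Mathlib

open MeasureTheory

/-- The fixed-block bootstrap path of length `N` with blocksize `b ∣ N`,
built from the circular data sequence `w : ZMod N_tot → α` with starting
indices `s : Fin (N/b) → ZMod N_tot`:  position `i` holds the observation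
`w (s ⌊i/b⌋ + (i mod b))`. -/
def fixedBlockPath {N N_tot : ℕ} {α : Type*} (w : ZMod N_tot → α)
    (b : ℕ) (hbN : b ∣ N) (s : Fin (N / b) → ZMod N_tot) (i : Fin N) : α :=
  w (s ⟨i.val / b, Nat.div_lt_div_of_lt_of_dvd hbN i.isLt⟩ + (i.val % b : ZMod N_tot))

lemma div_mul_div_aux (i b1 b2 : ℕ) (hb1 : 0 < b1) (hd : b1 ∣ b2) :
    i / b1 * b1 / b2 = i / b2 := by
  obtain ⟨k, rfl⟩ := hd
  rw [mul_comm (i / b1) b1, Nat.mul_div_mul_left _ _ hb1, Nat.div_div_eq_div_mul]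

lemma mod_mul_mod_aux (i b1 b2 : ℕ) (hd : b1 ∣ b2) :
    i / b1 * b1 % b2 + i % b1 = i % b2 := by
  obtain ⟨k, rfl⟩ := hd
  rw [mul_comm (i / b1) b1, Nat.mul_mod_mul_left, Nat.mod_mul, add_comm]

/-- When `b1 ∣ b2`, two fixed-block paths agree iff the `b1`-block starts are
determined by the `b2`-block starts. -/
lemma fixedBlockPath_eq_iff {N N_tot : ℕ} [NeZero N] [NeZero N_tot] {α : Type*}
    (w : ZMod N_tot → α) (hw : Function.Injective w)
    (b1 b2 : ℕ) (hb1 : 0 < b1) (hb2 : 0 < b2) (h1 : b1 ∣ N) (h2 : b2 ∣ N)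
    (hd : b1 ∣ b2) (s1 : Fin (N / b1) → ZMod N_tot) (s2 : Fin (N / b2) → ZMod N_tot) :
    fixedBlockPath w b1 h1 s1 = fixedBlockPath w b2 h2 s2 ↔
      s1 = fun j => s2 ⟨j.val * b1 / b2,
          Nat.div_lt_div_of_lt_of_dvd h2 (by
            rw [Nat.mul_comm]; exact (Nat.lt_div_iff_mul_lt' h1 j.val).mp j.isLt)⟩
        + ((j.val * b1 % b2 : ℕ) : ZMod N_tot) := by
  constructor
  · intro h
    funext j
    have hjN : j.val * b1 < N := by
      rw [Nat.mul_comm]; exact (Nat.lt_div_iff_mul_lt' h1 j.val).mp j.isLt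
    have hi := congrFun h ⟨j.val * b1, hjN⟩
    simp only [fixedBlockPath] at hi
    have hi' := hw hi
    simpa [Nat.mul_div_cancel _ hb1, Nat.mul_mod_left] using hi'
  · intro h
    funext i
    subst h
    simp only [fixedBlockPath]
    congr 1
    have L1 : i.val / b1 * b1 / b2 = i.val / b2 := div_mul_div_aux _ _ _ hb1 hd
    have L2 : i.val / b1 * b1 % b2 + i.val % b1 = i.val % b2 := mod_mul_mod_aux _ _ _ hd
    rw [add_assoc, ← Nat.cast_add, L2]
    simp only [L1]

lemma count_graph {A B : Type*} [Fintype A] [Fintype B] [Nonempty A] [Nonempty B]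
    [MeasurableSpace (A × B)] [DiscreteMeasurableSpace (A × B)] (F : B → A) :
    (PMF.uniformOfFintype (A × B)).toMeasure {p : A × B | p.1 = F p.2}
      = (Fintype.card A : ENNReal)⁻¹ := by
  classical
  rw [PMF.toMeasure_uniformOfFintype_apply _ MeasurableSet.of_discrete]
  have hc : Fintype.card ↑{p : A × B | p.1 = F p.2} = Fintype.card B :=
    Fintype.card_congr
      ⟨fun p => p.1.2, fun b => ⟨(F b, b), rfl⟩,
        fun p => Subtype.ext (by
          obtain ⟨⟨a, b⟩, hp⟩ := p
          simp only [Set.mem_setOf_eq] at hp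
          simp [hp]), fun b => rfl⟩
  rw [hc, Fintype.card_prod]
  have ha : (Fintype.card A : ENNReal) ≠ 0 := by simp [Fintype.card_ne_zero]
  have hb : (Fintype.card B : ENNReal) ≠ 0 := by simp [Fintype.card_ne_zero]
  have hbt : (Fintype.card B : ENNReal) ≠ ⊤ := ENNReal.natCast_ne_top _
  rw [Nat.cast_mul, ENNReal.div_eq_inv_mul,
    ENNReal.mul_inv (Or.inl ha) (Or.inl (ENNReal.natCast_ne_top _)),
    mul_assoc, ENNReal.inv_mul_cancel hb hbt, mul_one]

lemma count_graph2 {A B : Type*} [Fintype A] [Fintype B] [Nonempty A] [Nonempty B]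
    [MeasurableSpace (A × B)] [DiscreteMeasurableSpace (A × B)] (G : A → B) :
    (PMF.uniformOfFintype (A × B)).toMeasure {p : A × B | p.2 = G p.1}
      = (Fintype.card B : ENNReal)⁻¹ := by
  classical
  rw [PMF.toMeasure_uniformOfFintype_apply _ MeasurableSet.of_discrete]
  have hc : Fintype.card ↑{p : A × B | p.2 = G p.1} = Fintype.card A :=
    Fintype.card_congr
      ⟨fun p => p.1.1, fun a => ⟨(a, G a), rfl⟩,
        fun p => Subtype.ext (by
          obtain ⟨⟨a, b⟩, hp⟩ := p
          simp only [Set.mem_setOf_eq] at hp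
          simp [hp]), fun a => rfl⟩
  rw [hc, Fintype.card_prod]
  have ha : (Fintype.card A : ENNReal) ≠ 0 := by simp [Fintype.card_ne_zero]
  have hat : (Fintype.card A : ENNReal) ≠ ⊤ := ENNReal.natCast_ne_top _
  rw [Nat.cast_mul, ENNReal.div_eq_inv_mul,
    ENNReal.mul_inv (Or.inl ha) (Or.inl (ENNReal.natCast_ne_top _)),
    mul_comm ((Fintype.card A : ENNReal))⁻¹, mul_assoc,
    ENNReal.inv_mul_cancel ha hat, mul_one]

lemma div_dvd_div_aux {N b1 b2 : ℕ} (hb1 : 0 < b1) (hb2 : 0 < b2)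
    (hd : b1 ∣ b2) (h2 : b2 ∣ N) : N / b2 ∣ N / b1 := by
  obtain ⟨k, rfl⟩ := hd
  obtain ⟨m, rfl⟩ := h2
  have e1 : b1 * k * m / b1 = k * m := by
    rw [mul_assoc, Nat.mul_div_cancel_left _ hb1]
  rw [e1, Nat.mul_div_cancel_left _ hb2]
  exact Dvd.intro_left k rfl

lemma card_fun_pow (n N_tot : ℕ) [NeZero N_tot] :
    Fintype.card (Fin n → ZMod N_tot) = N_tot ^ n := by
  simp [ZMod.card]

/-- **Theorem 1.**  Let `b1, b2` be positive divisors of `N`, one dividing the other.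
Two independent fixed-block bootstrap paths of length `N` from an injective circular
data sequence of `N_tot` distinct observations, with fixed blocksizes `b1` and `b2`
(all block starting indices i.i.d. uniform on `ZMod N_tot`), are identical with
probability `(1/N_tot)^(lcm (N/b1) (N/b2))`. -/
theorem stmt3 {N N_tot : ℕ} [NeZero N] [NeZero N_tot] {α : Type*}
    (w : ZMod N_tot → α) (hw : Function.Injective w)
    (b1 b2 : ℕ) (hb1 : 0 < b1) (hb2 : 0 < b2) (h1 : b1 ∣ N) (h2 : b2 ∣ N)
    (hdvd : b1 ∣ b2 ∨ b2 ∣ b1) :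
    (PMF.uniformOfFintype
        ((Fin (N / b1) → ZMod N_tot) × (Fin (N / b2) → ZMod N_tot))).toMeasure
      {s | fixedBlockPath w b1 h1 s.1 = fixedBlockPath w b2 h2 s.2}
      = ((N_tot : ENNReal)⁻¹) ^ Nat.lcm (N / b1) (N / b2) := by
  rcases hdvd with hd | hd
  · have hlcm : Nat.lcm (N / b1) (N / b2) = N / b1 :=
      Nat.dvd_antisymm (Nat.lcm_dvd dvd_rfl (div_dvd_div_aux hb1 hb2 hd h2))
        (Nat.dvd_lcm_left _ _)
    let F : (Fin (N / b2) → ZMod N_tot) → (Fin (N / b1) → ZMod N_tot) :=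
      fun s2 j => s2 ⟨j.val * b1 / b2,
          Nat.div_lt_div_of_lt_of_dvd h2 (by
            rw [Nat.mul_comm]; exact (Nat.lt_div_iff_mul_lt' h1 j.val).mp j.isLt)⟩
        + ((j.val * b1 % b2 : ℕ) : ZMod N_tot)
    have hset : {s : (Fin (N / b1) → ZMod N_tot) × (Fin (N / b2) → ZMod N_tot) |
        fixedBlockPath w b1 h1 s.1 = fixedBlockPath w b2 h2 s.2}
        = {p | p.1 = F p.2} := by
      ext p
      exact fixedBlockPath_eq_iff w hw b1 b2 hb1 hb2 h1 h2 hd p.1 p.2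
    rw [hset]
    refine (count_graph F).trans ?_
    rw [card_fun_pow, hlcm, Nat.cast_pow, ENNReal.inv_pow]
  · have hlcm : Nat.lcm (N / b1) (N / b2) = N / b2 :=
      Nat.dvd_antisymm (Nat.lcm_dvd (div_dvd_div_aux hb2 hb1 hd h1) dvd_rfl)
        (Nat.dvd_lcm_right _ _)
    let G : (Fin (N / b1) → ZMod N_tot) → (Fin (N / b2) → ZMod N_tot) :=
      fun s1 j => s1 ⟨j.val * b2 / b1,
          Nat.div_lt_div_of_lt_of_dvd h1 (by
            rw [Nat.mul_comm]; exact (Nat.lt_div_iff_mul_lt' h2 j.val).mp j.isLt)⟩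
        + ((j.val * b2 % b1 : ℕ) : ZMod N_tot)
    have hset : {s : (Fin (N / b1) → ZMod N_tot) × (Fin (N / b2) → ZMod N_tot) |
        fixedBlockPath w b1 h1 s.1 = fixedBlockPath w b2 h2 s.2}
        = {p | p.2 = G p.1} := by
      ext p
      rw [Set.mem_setOf_eq, eq_comm]
      exact fixedBlockPath_eq_iff w hw b2 b1 hb2 hb1 h2 h1 hd p.2 p.1
    rw [hset]
    refine (count_graph2 G).trans ?_
    rw [card_fun_pow, hlcm, Nat.cast_pow, ENNReal.inv_pow]
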